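/- arXiv:2007.12740 — 4 statements merged into one kernel-verified Lean document; each statement's English description precedes it below -/
import Mathlib

section
/- Let s_1, …, s_n be square-integrable real random variables with E[s_i] = e_i, and let c > 0 be a real constant. For μ, ρ ∈ ℝ define f(μ, ρ) = (1/n)·Σ_{i=1}^n E[(ρμc + (1−ρ)s_i − e_i)²]. Set μ* = (1/(nc))·Σ_{i=1}^n e_i, φ² = (1/n)·Σ_{i=1}^n (μ*c − e_i)², ψ² = (1/n)·Σ_{i=1}^n E[(s_i − e_i)²], and δ² = φ² + ψ². If δ² > 0, then f(μ*, ψ²/δ²) = φ²ψ²/δ², and f(μ, ρ) ≥ φ²ψ²/δ² for all μ, ρ ∈ ℝ; i.e., the linear shrinkage family attains its minimum average expected squared loss φ²ψ²/δ² at (μ*, ψ²/δ²). -/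
open MeasureTheory ProbabilityTheory Filter

lemma stmt1_key {Ω : Type*} [MeasurableSpace Ω] (μ : Measure Ω) [IsProbabilityMeasure μ]
    (s : Ω → ℝ) (hs : MemLp s 2 μ) (e : ℝ) (he : e = ∫ ω, s ω ∂μ) (A b : ℝ) :
    ∫ ω, (A + b * (s ω - e)) ^ 2 ∂μ = A ^ 2 + b ^ 2 * ∫ ω, (s ω - e) ^ 2 ∂μ := by
  have hse : MemLp (fun ω => s ω - e) 2 μ := hs.sub (memLp_const e)
  have h1 : Integrable (fun ω => s ω - e) μ := hse.integrable (by norm_num)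
  have h2 : Integrable (fun ω => (s ω - e) ^ 2) μ := hse.integrable_sq
  have hz : ∫ ω, (s ω - e) ∂μ = 0 := by
    rw [integral_sub (hs.integrable (by norm_num)) (integrable_const e),
      integral_const, he]
    simp
  have hfun : (fun ω => (A + b * (s ω - e)) ^ 2)
      = (fun ω => A ^ 2 + ((2 * A * b) * (s ω - e) + b ^ 2 * (s ω - e) ^ 2)) := by
    funext ω; ring
  have h3 : Integrable (fun ω => (2 * A * b) * (s ω - e) + b ^ 2 * (s ω - e) ^ 2) μ :=
    (h1.const_mul _).add (h2.const_mul _)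
  rw [hfun, integral_add (integrable_const _) h3,
    integral_add (h1.const_mul _) (h2.const_mul _), MeasureTheory.integral_const_mul,
    MeasureTheory.integral_const_mul, hz, integral_const]
  simp

/-- Theorem 1 of the paper, reduced along the projection γ.
For square-integrable `s₁, …, sₙ` with means `eᵢ` and a constant `c > 0`, the
average expected squared loss
`f(μ, ρ) = (1/n) Σᵢ E[(ρμc + (1−ρ)sᵢ − eᵢ)²]` of the linear shrinkage family
attains its minimum value `φ²ψ²/δ²` at `(μ*, ψ²/δ²)`, where
`μ* = (1/(nc)) Σ eᵢ`, `φ² = (1/n) Σ (μ*c − eᵢ)²`, `ψ² = (1/n) Σ E[(sᵢ − eᵢ)²]`,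
and `δ² = φ² + ψ² > 0`. -/
theorem stmt1 {Ω : Type*} [MeasurableSpace Ω] (μ : Measure Ω) [IsProbabilityMeasure μ]
    (n : ℕ) (hn : 0 < n) (s : Fin n → Ω → ℝ) (hs : ∀ i, MemLp (s i) 2 μ)
    (e : Fin n → ℝ) (he : ∀ i, e i = ∫ ω, s i ω ∂μ)
    (c : ℝ) (hc : 0 < c)
    (f : ℝ → ℝ → ℝ)
    (hf : ∀ m ρ, f m ρ =
      ((1 : ℝ) / n) * ∑ i, ∫ ω, (ρ * m * c + (1 - ρ) * s i ω - e i) ^ 2 ∂μ)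
    (mStar φsq ψsq δsq : ℝ)
    (hm : mStar = ((1 : ℝ) / (n * c)) * ∑ i, e i)
    (hφ : φsq = ((1 : ℝ) / n) * ∑ i, (mStar * c - e i) ^ 2)
    (hψ : ψsq = ((1 : ℝ) / n) * ∑ i, ∫ ω, (s i ω - e i) ^ 2 ∂μ)
    (hδ : δsq = φsq + ψsq) (hδpos : 0 < δsq) :
    f mStar (ψsq / δsq) = φsq * ψsq / δsq ∧
      ∀ m ρ : ℝ, φsq * ψsq / δsq ≤ f m ρ := by
  have hn' : (n : ℝ) ≠ 0 := Nat.cast_ne_zero.mpr hn.ne'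
  have hnc : (n : ℝ) * c ≠ 0 := mul_ne_zero hn' hc.ne'
  -- sum of means
  have hsum : (∑ i, e i) = (n : ℝ) * c * mStar := by
    rw [hm]; field_simp
  -- expansion of the sum of squares
  have expand : ∀ m : ℝ, (∑ i, (m * c - e i) ^ 2)
      = (n : ℝ) * (m * c) ^ 2 - 2 * (m * c) * (∑ i, e i) + ∑ i, (e i) ^ 2 := by
    intro m
    have h1 : (∑ i, (m * c - e i) ^ 2)
        = ∑ i, ((m * c) ^ 2 - 2 * (m * c) * (e i) + (e i) ^ 2) :=
      Finset.sum_congr rfl fun i _ => by ring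
    rw [h1, Finset.sum_add_distrib, Finset.sum_sub_distrib, Finset.sum_const,
      ← Finset.mul_sum]
    simp [mul_comm]
  have hGsum : ∀ m : ℝ, (∑ i, (m * c - e i) ^ 2)
      = (∑ i, (mStar * c - e i) ^ 2) + (n : ℝ) * ((m - mStar) * c) ^ 2 := by
    intro m
    rw [expand m, expand mStar, hsum]; ring
  -- the key formula for f
  have hF : ∀ m ρ : ℝ, f m ρ
      = ρ ^ 2 * (φsq + ((m - mStar) * c) ^ 2) + (1 - ρ) ^ 2 * ψsq := by
    intro m ρ
    have hi : ∀ i : Fin n, (∫ ω, (ρ * m * c + (1 - ρ) * s i ω - e i) ^ 2 ∂μ)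
        = (ρ * (m * c - e i)) ^ 2 + (1 - ρ) ^ 2 * ∫ ω, (s i ω - e i) ^ 2 ∂μ := by
      intro i
      have heq : (fun ω => (ρ * m * c + (1 - ρ) * s i ω - e i) ^ 2)
          = (fun ω => (ρ * (m * c - e i) + (1 - ρ) * (s i ω - e i)) ^ 2) := by
        funext ω; ring
      rw [heq, stmt1_key μ (s i) (hs i) (e i) (he i)]
    rw [hf]
    simp_rw [hi]
    rw [Finset.sum_add_distrib, ← Finset.mul_sum]
    have : (∑ i, (ρ * (m * c - e i)) ^ 2) = ρ ^ 2 * ∑ i, (m * c - e i) ^ 2 := by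
      rw [Finset.mul_sum]; exact Finset.sum_congr rfl fun i _ => by ring
    rw [this, hGsum m, hψ, hφ]
    field_simp
  -- nonnegativity
  have hφnn : 0 ≤ φsq := by
    rw [hφ]
    apply mul_nonneg (by positivity)
    exact Finset.sum_nonneg fun i _ => sq_nonneg _
  have hψnn : 0 ≤ ψsq := by
    rw [hψ]
    apply mul_nonneg (by positivity)
    exact Finset.sum_nonneg fun i _ => integral_nonneg fun ω => sq_nonneg _
  constructor
  · rw [hF]
    have hφδ : φsq = δsq - ψsq := by linarith
    rw [hφδ]
    field_simp
    ring
  · intro m ρ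
    subst hδ
    rw [hF]
    rw [div_le_iff₀ hδpos]
    have hX : 0 ≤ ((m - mStar) * c) ^ 2 := sq_nonneg _
    have hδnn : (0:ℝ) ≤ φsq + ψsq := by linarith
    nlinarith [sq_nonneg (ρ * φsq - (1 - ρ) * ψsq),
      mul_nonneg (mul_nonneg (sq_nonneg ρ) hX) hδnn]
end

section
/- Let B > 0 and κ₁, κ₂ ≥ 0 be real constants. For each T ∈ ℕ let a_T² and δ̂_T² be nonnegative random variables on a probability space and let δ_T² ∈ [0, B] be a nonnegative constant. Assume that E[a_T²] → 0 and E[(δ̂_T² − δ_T²)²] → 0 as T → ∞, and that almost surely a_T² / ((δ̂_T²)^{κ₁/2} · (δ_T²)^{κ₂/2}) ≤ 2(δ̂_T² + δ_T²), where the quotient is interpreted as 0 whenever its denominator is 0. Then E[a_T² / ((δ̂_T²)^{κ₁/2} · (δ_T²)^{κ₂/2})] → 0 as T → ∞. -/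
open MeasureTheory ProbabilityTheory Filter

set_option maxHeartbeats 1000000 in
/-- Pointwise key inequality. -/
lemma stmt8_aux (B κ₁ κ₂ η a d s : ℝ) (hB : 0 < B) (hκ₁ : 0 ≤ κ₁) (hκ₂ : 0 ≤ κ₂)
    (hη : 0 < η) (ha : 0 ≤ a) (hd : 0 ≤ d) (hs : 0 ≤ s) (hsB : s ≤ B)
    (hdom : a / (d ^ (κ₁ / 2) * s ^ (κ₂ / 2)) ≤ 2 * (d + s)) :
    a / (d ^ (κ₁ / 2) * s ^ (κ₂ / 2)) ≤
      5 * η + (1 / η + 4 / η + 16 * B / η ^ 2 +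
        1 / ((η / 2) ^ (κ₁ / 2) * η ^ (κ₂ / 2))) * (a + (d - s) ^ 2) := by
  obtain ⟨c, hc_def⟩ : ∃ c : ℝ, c = (η / 2) ^ (κ₁ / 2) * η ^ (κ₂ / 2) := ⟨_, rfl⟩
  have hc : 0 < c := by
    rw [hc_def]
    exact mul_pos (Real.rpow_pos_of_pos (by positivity) _)
      (Real.rpow_pos_of_pos hη _)
  obtain ⟨K, hK_def⟩ : ∃ K : ℝ, K = 1 / η + 4 / η + 16 * B / η ^ 2 + 1 / c :=
    ⟨_, rfl⟩
  rw [← hc_def, ← hK_def]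
  have h0 : 0 ≤ 1 / η := by positivity
  have h1 : 0 ≤ 4 / η := by positivity
  have h2 : 0 ≤ 16 * B / η ^ 2 := by positivity
  have h3 : 0 ≤ 1 / c := by positivity
  have hKpos : 0 < K := by rw [hK_def]; positivity
  have hK1 : 1 / η ≤ K := by rw [hK_def]; linarith
  have hKc : 1 / c ≤ K := by rw [hK_def]; linarith
  have hsq : (0 : ℝ) ≤ (d - s) ^ 2 := sq_nonneg _
  have hxa : (d - s) ^ 2 ≤ a + (d - s) ^ 2 := le_add_of_nonneg_left ha
  have haa : a ≤ a + (d - s) ^ 2 := le_add_of_nonneg_right hsq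
  rcases lt_or_ge s η with hsη | hsη
  · -- small s: use the domination bound directly
    have hkey2 : 2 * η * (d + s) ≤ 5 * η ^ 2 + (d - s) ^ 2 := by
      nlinarith [sq_nonneg (d - s - η)]
    have key : 2 * (d + s) ≤ 5 * η + (1 / η) * (d - s) ^ 2 := by
      have h2' := mul_le_mul_of_nonneg_left hkey2 (le_of_lt (one_div_pos.mpr hη))
      have he : (1 / η) * (2 * η * (d + s)) = 2 * (d + s) := by
        field_simp
      have he2 : (1 / η) * (5 * η ^ 2 + (d - s) ^ 2) =
          5 * η + (1 / η) * (d - s) ^ 2 := by field_simp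
      rw [he, he2] at h2'
      exact h2'
    have hKbd : (1 / η) * (d - s) ^ 2 ≤ K * (a + (d - s) ^ 2) :=
      (mul_le_mul_of_nonneg_right hK1 hsq).trans
        (mul_le_mul_of_nonneg_left hxa hKpos.le)
    linarith [hdom]
  · rcases le_or_gt (2 * |d - s|) s with habs | habs
    · -- d is bounded below by s/2 ≥ η/2
      have hds : -(s / 2) ≤ d - s := by
        have := neg_abs_le (d - s); linarith [abs_nonneg (d - s)]
      have hd2 : η / 2 ≤ d := by linarith
      have hden : c ≤ d ^ (κ₁ / 2) * s ^ (κ₂ / 2) := by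
        rw [hc_def]
        apply mul_le_mul
        · exact Real.rpow_le_rpow (by positivity) hd2 (by positivity)
        · exact Real.rpow_le_rpow hη.le hsη (by positivity)
        · exact Real.rpow_nonneg hη.le _
        · exact Real.rpow_nonneg (by positivity) _
      have hf : a / (d ^ (κ₁ / 2) * s ^ (κ₂ / 2)) ≤ a / c :=
        div_le_div_of_nonneg_left ha hc hden
      have hfc : a / c ≤ K * a := by
        rw [div_eq_mul_inv, mul_comm]
        exact mul_le_mul_of_nonneg_right (by rw [← one_div]; exact hKc) ha
      have hKa : K * a ≤ K * (a + (d - s) ^ 2) :=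
        mul_le_mul_of_nonneg_left haa hKpos.le
      exact (hf.trans (hfc.trans hKa)).trans
        (le_add_of_nonneg_left (by positivity))
    · -- |d-s| large: use the (d-s)² term
      have hx2 : s ^ 2 < 4 * (d - s) ^ 2 := by
        have h1' : s * s < (2 * |d - s|) * (2 * |d - s|) :=
          mul_self_lt_mul_self hs habs
        have h2' : |d - s| * |d - s| = (d - s) ^ 2 := by
          rw [← abs_mul, abs_mul_self, sq]
        nlinarith [h2']
      have hη2s2 : η ^ 2 ≤ s ^ 2 := by nlinarith
      have hpoly : 2 * (d + s) * η ^ 2 ≤ (4 * η + 16 * B) * (d - s) ^ 2 := by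
        nlinarith [mul_nonneg hη.le (sq_nonneg (2 * (d - s) - η)),
          mul_le_mul_of_nonneg_left hx2.le hη.le,
          mul_le_mul_of_nonneg_left hη2s2 hη.le,
          mul_le_mul_of_nonneg_right hsB (sq_nonneg η),
          mul_le_mul_of_nonneg_left hη2s2 hB.le,
          mul_le_mul_of_nonneg_left hx2.le hB.le]
      have key : 2 * (d + s) ≤ (4 / η + 16 * B / η ^ 2) * (d - s) ^ 2 := by
        have h2' := mul_le_mul_of_nonneg_left hpoly
          (le_of_lt (one_div_pos.mpr (by positivity : (0:ℝ) < η ^ 2)))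
        have he : (1 / η ^ 2) * (2 * (d + s) * η ^ 2) = 2 * (d + s) := by
          field_simp
        have he2 : (1 / η ^ 2) * ((4 * η + 16 * B) * (d - s) ^ 2) =
            (4 / η + 16 * B / η ^ 2) * (d - s) ^ 2 := by field_simp
        rw [he, he2] at h2'
        exact h2'
      have hKbig : 4 / η + 16 * B / η ^ 2 ≤ K := by rw [hK_def]; linarith
      have hfin : (4 / η + 16 * B / η ^ 2) * (d - s) ^ 2 ≤
          K * (a + (d - s) ^ 2) :=
        (mul_le_mul_of_nonneg_right hKbig hsq).trans
          (mul_le_mul_of_nonneg_left hxa hKpos.le)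
      have h5 : (0:ℝ) < 5 * η := by positivity
      linarith [hdom]

/-- Lemma A.1 of the supplementary material.
If `E[a_T²] → 0`, `E[(δ̂_T² − δ_T²)²] → 0`, `δ_T² ∈ [0, B]`, and a.s.
`a_T² / ((δ̂_T²)^{κ₁/2}(δ_T²)^{κ₂/2}) ≤ 2(δ̂_T² + δ_T²)`, then
`E[a_T² / ((δ̂_T²)^{κ₁/2}(δ_T²)^{κ₂/2})] → 0` (quotients are `0` when the
denominator vanishes, which is Lean's convention for division by zero). -/
theorem stmt8 {Ω : Type*} [MeasurableSpace Ω] (μ : Measure Ω) [IsProbabilityMeasure μ]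
    (B κ₁ κ₂ : ℝ) (hB : 0 < B) (hκ₁ : 0 ≤ κ₁) (hκ₂ : 0 ≤ κ₂)
    (aSq δhat : ℕ → Ω → ℝ) (δsq : ℕ → ℝ)
    (hmeasA : ∀ T, Measurable (aSq T)) (hmeasD : ∀ T, Measurable (δhat T))
    (haNN : ∀ T, ∀ᵐ ω ∂μ, 0 ≤ aSq T ω) (hdNN : ∀ T, ∀ᵐ ω ∂μ, 0 ≤ δhat T ω)
    (hδsq : ∀ T, δsq T ∈ Set.Icc 0 B)
    (hIntA : ∀ T, Integrable (aSq T) μ)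
    (hL2 : ∀ T, MemLp (δhat T) 2 μ)
    (ha : Tendsto (fun T => ∫ ω, aSq T ω ∂μ) atTop (nhds 0))
    (hd : Tendsto (fun T => ∫ ω, (δhat T ω - δsq T) ^ 2 ∂μ) atTop (nhds 0))
    (hdom : ∀ T, ∀ᵐ ω ∂μ,
      aSq T ω / ((δhat T ω) ^ (κ₁ / 2) * (δsq T) ^ (κ₂ / 2)) ≤
        2 * (δhat T ω + δsq T)) :
    Tendsto
      (fun T => ∫ ω, aSq T ω / ((δhat T ω) ^ (κ₁ / 2) * (δsq T) ^ (κ₂ / 2)) ∂μ)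
      atTop (nhds 0) := by
  -- measurability
  have hmeasF : ∀ T, Measurable
      (fun ω => aSq T ω / ((δhat T ω) ^ (κ₁ / 2) * (δsq T) ^ (κ₂ / 2))) := by
    intro T
    have hc : Continuous fun x : ℝ => x ^ (κ₁ / 2) :=
      continuous_id.rpow_const fun x => Or.inr (by positivity)
    exact (hmeasA T).div (((hc.measurable).comp (hmeasD T)).mul_const _)
  -- nonnegativity of f
  have hfNN : ∀ T, ∀ᵐ ω ∂μ,
      0 ≤ aSq T ω / ((δhat T ω) ^ (κ₁ / 2) * (δsq T) ^ (κ₂ / 2)) := by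
    intro T
    filter_upwards [haNN T, hdNN T] with ω h1 h2
    exact div_nonneg h1 (mul_nonneg (Real.rpow_nonneg h2 _)
      (Real.rpow_nonneg (hδsq T).1 _))
  -- integrability of f
  have hIntD : ∀ T, Integrable (δhat T) μ := fun T => (hL2 T).integrable one_le_two
  have hIntSq : ∀ T, Integrable (fun ω => (δhat T ω - δsq T) ^ 2) μ := by
    intro T
    exact ((hL2 T).sub (memLp_const (δsq T))).integrable_sq
  have hIntF : ∀ T, Integrable
      (fun ω => aSq T ω / ((δhat T ω) ^ (κ₁ / 2) * (δsq T) ^ (κ₂ / 2))) μ := by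
    intro T
    apply Integrable.mono' (((hIntD T).add (integrable_const (δsq T))).const_mul 2)
      (hmeasF T).aestronglyMeasurable
    filter_upwards [hfNN T, hdom T] with ω h1 h2
    rw [Real.norm_eq_abs, abs_of_nonneg h1]
    simpa [mul_add] using h2
  -- nonnegativity of integrals
  have hIntFNN : ∀ T,
      0 ≤ ∫ ω, aSq T ω / ((δhat T ω) ^ (κ₁ / 2) * (δsq T) ^ (κ₂ / 2)) ∂μ :=
    fun T => integral_nonneg_of_ae (hfNN T)
  rw [Metric.tendsto_atTop]
  intro ε hε
  obtain ⟨η, hη_def⟩ : ∃ η : ℝ, η = ε / 10 := ⟨_, rfl⟩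
  have hη : 0 < η := by rw [hη_def]; positivity
  obtain ⟨c, hc_def⟩ : ∃ c : ℝ, c = (η / 2) ^ (κ₁ / 2) * η ^ (κ₂ / 2) := ⟨_, rfl⟩
  have hc : 0 < c := by
    rw [hc_def]
    exact mul_pos (Real.rpow_pos_of_pos (by positivity) _)
      (Real.rpow_pos_of_pos hη _)
  obtain ⟨K, hK_def⟩ : ∃ K : ℝ, K = 1 / η + 4 / η + 16 * B / η ^ 2 + 1 / c :=
    ⟨_, rfl⟩
  have hK : 0 < K := by rw [hK_def]; positivity
  -- eventually both integrals are small
  have hsmall : ∀ᶠ T in atTop,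
      (∫ ω, aSq T ω ∂μ) < ε / (4 * K) ∧
      (∫ ω, (δhat T ω - δsq T) ^ 2 ∂μ) < ε / (4 * K) := by
    have h1 := (ha.eventually (eventually_lt_nhds
      (by positivity : (0:ℝ) < ε / (4 * K))))
    have h2 := (hd.eventually (eventually_lt_nhds
      (by positivity : (0:ℝ) < ε / (4 * K))))
    filter_upwards [h1, h2] with T hT1 hT2
    exact ⟨hT1, hT2⟩
  rw [eventually_atTop] at hsmall
  obtain ⟨N, hN⟩ := hsmall
  refine ⟨N, fun T hT => ?_⟩
  obtain ⟨hsa, hsd⟩ := hN T hT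
  rw [Real.dist_eq, sub_zero, abs_of_nonneg (hIntFNN T)]
  -- pointwise bound
  have hbd : ∀ᵐ ω ∂μ,
      aSq T ω / ((δhat T ω) ^ (κ₁ / 2) * (δsq T) ^ (κ₂ / 2)) ≤
      5 * η + K * (aSq T ω + (δhat T ω - δsq T) ^ 2) := by
    filter_upwards [haNN T, hdNN T, hdom T] with ω h1 h2 h3
    rw [hK_def, hc_def]
    exact stmt8_aux B κ₁ κ₂ η (aSq T ω) (δhat T ω) (δsq T) hB hκ₁ hκ₂ hη h1 h2
      (hδsq T).1 (hδsq T).2 h3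
  have hInt1 : Integrable (fun ω => aSq T ω + (δhat T ω - δsq T) ^ 2) μ :=
    (hIntA T).add (hIntSq T)
  have hInt2 : Integrable (fun ω => K * (aSq T ω + (δhat T ω - δsq T) ^ 2)) μ :=
    hInt1.const_mul K
  have hIntBd : Integrable
      (fun ω => 5 * η + K * (aSq T ω + (δhat T ω - δsq T) ^ 2)) μ :=
    (integrable_const _).add hInt2
  have hmono := integral_mono_ae (hIntF T) hIntBd hbd
  have hcomp : ∫ ω, (5 * η + K * (aSq T ω + (δhat T ω - δsq T) ^ 2)) ∂μ =
      5 * η + K * ((∫ ω, aSq T ω ∂μ) + ∫ ω, (δhat T ω - δsq T) ^ 2 ∂μ) := by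
    rw [integral_add (integrable_const _) hInt2, integral_const,
      integral_const_mul, integral_add (hIntA T) (hIntSq T)]
    simp
  rw [hcomp] at hmono
  have h5η : 5 * η = ε / 2 := by rw [hη_def]; ring
  have hKs : K * ((∫ ω, aSq T ω ∂μ) + ∫ ω, (δhat T ω - δsq T) ^ 2 ∂μ) < ε / 2 := by
    have hsum : (∫ ω, aSq T ω ∂μ) + (∫ ω, (δhat T ω - δsq T) ^ 2 ∂μ) <
        ε / (2 * K) := by
      have he : ε / (4 * K) + ε / (4 * K) = ε / (2 * K) := by
        field_simp; ring
      linarith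
    calc K * ((∫ ω, aSq T ω ∂μ) + ∫ ω, (δhat T ω - δsq T) ^ 2 ∂μ)
        < K * (ε / (2 * K)) := mul_lt_mul_of_pos_left hsum hK
      _ = ε / 2 := by field_simp
  linarith
end

section
/- Let B > 0. For each T ∈ ℕ, let φ̂_T² and δ̂_T² be nonnegative random variables on a probability space with φ̂_T² ≤ δ̂_T² almost surely, and let φ_T², δ_T² be constants with 0 ≤ φ_T² ≤ δ_T² ≤ B. If E[(φ̂_T² − φ_T²)²] → 0 and E[(δ̂_T² − δ_T²)²] → 0 as T → ∞, then E[(φ̂_T²·δ_T² − φ_T²·δ̂_T²)² / (δ̂_T² · δ_T⁴)] → 0 as T → ∞, where the quotient is interpreted as 0 whenever its denominator is 0. -/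
open MeasureTheory ProbabilityTheory Filter

private lemma abs_integral_le_sqrt {Ω : Type*} [MeasurableSpace Ω] (μ : Measure Ω)
    [IsProbabilityMeasure μ] (X : Ω → ℝ) (hX : MemLp X 2 μ) :
    ∫ ω, |X ω| ∂μ ≤ Real.sqrt (∫ ω, (X ω) ^ 2 ∂μ) := by
  have hpq : (2 : ℝ).HolderConjugate 2 := by constructor <;> norm_num
  have h2 : (ENNReal.ofReal (2 : ℝ)) = 2 := by simp [ENNReal.ofReal_ofNat]
  have habs : MemLp (fun ω => |X ω|) (ENNReal.ofReal (2 : ℝ)) μ := by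
    rw [h2]; exact hX.abs
  have hone : MemLp (fun _ : Ω => (1 : ℝ)) (ENNReal.ofReal (2 : ℝ)) μ := by
    rw [h2]; exact memLp_const 1
  have h := integral_mul_le_Lp_mul_Lq_of_nonneg hpq
    (Filter.Eventually.of_forall fun ω => abs_nonneg (X ω))
    (Filter.Eventually.of_forall fun _ => zero_le_one) habs hone
  simp only [mul_one, Real.one_rpow] at h
  have hsq : (fun ω => |X ω| ^ (2 : ℝ)) = fun ω => (X ω) ^ 2 := by
    funext ω
    rw [show (2:ℝ) = ((2:ℕ):ℝ) by norm_num, Real.rpow_natCast, sq_abs]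
  rw [hsq] at h
  simp only [integral_const, measure_univ, probReal_univ, ENNReal.toReal_one, smul_eq_mul, one_mul,
    Real.one_rpow, mul_one] at h
  calc ∫ ω, |X ω| ∂μ ≤ (∫ ω, (X ω) ^ 2 ∂μ) ^ (1 / 2 : ℝ) := h
    _ = Real.sqrt (∫ ω, (X ω) ^ 2 ∂μ) := (Real.sqrt_eq_rpow _).symm

/-- core estimate of Theorem 2 of the paper.
With nonnegative random variables `φ̂_T² ≤ δ̂_T²` (a.s.) and constants
`0 ≤ φ_T² ≤ δ_T² ≤ B`, if `E[(φ̂_T² − φ_T²)²] → 0` and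
`E[(δ̂_T² − δ_T²)²] → 0`, then
`E[(φ̂_T² δ_T² − φ_T² δ̂_T²)² / (δ̂_T² δ_T⁴)] → 0` (quotients are `0` when the
denominator vanishes, Lean's division-by-zero convention). -/
theorem stmt9 {Ω : Type*} [MeasurableSpace Ω] (μ : Measure Ω) [IsProbabilityMeasure μ]
    (B : ℝ) (hB : 0 < B)
    (φhat δhat : ℕ → Ω → ℝ) (φsq δsq : ℕ → ℝ)
    (hmeasφ : ∀ T, Measurable (φhat T)) (hmeasδ : ∀ T, Measurable (δhat T))
    (hφNN : ∀ T, ∀ᵐ ω ∂μ, 0 ≤ φhat T ω) (hδNN : ∀ T, ∀ᵐ ω ∂μ, 0 ≤ δhat T ω)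
    (hle : ∀ T, ∀ᵐ ω ∂μ, φhat T ω ≤ δhat T ω)
    (hconst : ∀ T, 0 ≤ φsq T ∧ φsq T ≤ δsq T ∧ δsq T ≤ B)
    (hL2φ : ∀ T, MemLp (φhat T) 2 μ) (hL2δ : ∀ T, MemLp (δhat T) 2 μ)
    (hφ : Tendsto (fun T => ∫ ω, (φhat T ω - φsq T) ^ 2 ∂μ) atTop (nhds 0))
    (hδ : Tendsto (fun T => ∫ ω, (δhat T ω - δsq T) ^ 2 ∂μ) atTop (nhds 0)) :
    Tendsto
      (fun T => ∫ ω,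
        (φhat T ω * δsq T - φsq T * δhat T ω) ^ 2 / (δhat T ω * (δsq T) ^ 2) ∂μ)
      atTop (nhds 0) := by
  -- pointwise bound: ratio ≤ |φ̂ − φ| + |δ̂ − δ|
  have key : ∀ T, ∀ᵐ ω ∂μ,
      (φhat T ω * δsq T - φsq T * δhat T ω) ^ 2 / (δhat T ω * (δsq T) ^ 2)
        ≤ |φhat T ω - φsq T| + |δhat T ω - δsq T| := by
    intro T
    filter_upwards [hφNN T, hδNN T, hle T] with ω h1 h2 h3
    obtain ⟨hc1, hc2, hc3⟩ := hconst T
    set a := φhat T ω; set b := δhat T ω; set c := φsq T; set d := δsq T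
    rcases eq_or_lt_of_le h2 with hb0 | hb0
    · simp [← hb0]; positivity
    rcases eq_or_lt_of_le (le_trans hc1 hc2) with hd0 | hd0
    · simp [← hd0]; positivity
    have hnum : |a * d - c * b| ≤ d * (|a - c| + |b - d|) := by
      have : a * d - c * b = (a - c) * d - c * (b - d) := by ring
      rw [this]
      calc |(a - c) * d - c * (b - d)| ≤ |(a - c) * d| + |c * (b - d)| := abs_sub _ _
        _ = |a - c| * d + c * |b - d| := by
            rw [abs_mul, abs_mul, abs_of_nonneg hd0.le, abs_of_nonneg hc1]
        _ ≤ |a - c| * d + d * |b - d| := by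
            have := hc2; nlinarith [abs_nonneg (b - d)]
        _ = d * (|a - c| + |b - d|) := by ring
    have hbig : |a * d - c * b| ≤ b * d := by
      have h1' : 0 ≤ a * d := mul_nonneg h1 hd0.le
      have h2' : 0 ≤ c * b := mul_nonneg hc1 h2
      have h3' : a * d ≤ b * d := by nlinarith
      have h4' : c * b ≤ d * b := by nlinarith
      rw [abs_sub_le_iff]; constructor <;> nlinarith
    have hdenpos : 0 < b * d ^ 2 := by positivity
    rw [div_le_iff₀ hdenpos]
    have : (a * d - c * b) ^ 2 = |a * d - c * b| * |a * d - c * b| := by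
      rw [abs_mul_abs_self]; ring
    rw [this]
    calc |a * d - c * b| * |a * d - c * b| ≤ (b * d) * (d * (|a - c| + |b - d|)) := by
          apply mul_le_mul hbig hnum (abs_nonneg _) (mul_nonneg h2 hd0.le)
      _ = (|a - c| + |b - d|) * (b * d ^ 2) := by ring
  -- integrability of the dominating function
  have hintφ : ∀ T, Integrable (fun ω => |φhat T ω - φsq T|) μ := fun T =>
    (((hL2φ T).sub (memLp_const (φsq T))).integrable (by norm_num)).abs
  have hintδ : ∀ T, Integrable (fun ω => |δhat T ω - δsq T|) μ := fun T =>
    (((hL2δ T).sub (memLp_const (δsq T))).integrable (by norm_num)).abs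
  have hintg : ∀ T, Integrable
      (fun ω => |φhat T ω - φsq T| + |δhat T ω - δsq T|) μ := fun T =>
    (hintφ T).add (hintδ T)
  -- nonnegativity and integrability of the ratio
  have hratNN : ∀ T, ∀ᵐ ω ∂μ, 0 ≤
      (φhat T ω * δsq T - φsq T * δhat T ω) ^ 2 / (δhat T ω * (δsq T) ^ 2) := by
    intro T
    filter_upwards [hδNN T] with ω h2
    exact div_nonneg (sq_nonneg _) (by positivity)
  have hratmeas : ∀ T, AEStronglyMeasurable
      (fun ω => (φhat T ω * δsq T - φsq T * δhat T ω) ^ 2 / (δhat T ω * (δsq T) ^ 2)) μ := by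
    intro T
    exact (((((hmeasφ T).mul_const _).sub ((hmeasδ T).const_mul _)).pow_const 2).div
      ((hmeasδ T).mul_const _)).aestronglyMeasurable
  have hratint : ∀ T, Integrable
      (fun ω => (φhat T ω * δsq T - φsq T * δhat T ω) ^ 2 / (δhat T ω * (δsq T) ^ 2)) μ := by
    intro T
    refine Integrable.mono' (hintg T) (hratmeas T) ?_
    filter_upwards [key T, hratNN T] with ω h h0
    rwa [Real.norm_of_nonneg h0]
  -- upper bound on the integral
  have hub : ∀ T,
      ∫ ω, (φhat T ω * δsq T - φsq T * δhat T ω) ^ 2 / (δhat T ω * (δsq T) ^ 2) ∂μ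
        ≤ Real.sqrt (∫ ω, (φhat T ω - φsq T) ^ 2 ∂μ)
          + Real.sqrt (∫ ω, (δhat T ω - δsq T) ^ 2 ∂μ) := by
    intro T
    calc ∫ ω, (φhat T ω * δsq T - φsq T * δhat T ω) ^ 2 / (δhat T ω * (δsq T) ^ 2) ∂μ
        ≤ ∫ ω, (|φhat T ω - φsq T| + |δhat T ω - δsq T|) ∂μ :=
          integral_mono_ae (hratint T) (hintg T) (key T)
      _ = (∫ ω, |φhat T ω - φsq T| ∂μ) + ∫ ω, |δhat T ω - δsq T| ∂μ :=
          integral_add (hintφ T) (hintδ T)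
      _ ≤ Real.sqrt (∫ ω, (φhat T ω - φsq T) ^ 2 ∂μ)
          + Real.sqrt (∫ ω, (δhat T ω - δsq T) ^ 2 ∂μ) := by
          gcongr
          · exact abs_integral_le_sqrt μ _ ((hL2φ T).sub (memLp_const (φsq T)))
          · exact abs_integral_le_sqrt μ _ ((hL2δ T).sub (memLp_const (δsq T)))
  have hlb : ∀ T, 0 ≤
      ∫ ω, (φhat T ω * δsq T - φsq T * δhat T ω) ^ 2 / (δhat T ω * (δsq T) ^ 2) ∂μ :=
    fun T => integral_nonneg_of_ae (hratNN T)
  have hg : Tendsto (fun T => Real.sqrt (∫ ω, (φhat T ω - φsq T) ^ 2 ∂μ)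
      + Real.sqrt (∫ ω, (δhat T ω - δsq T) ^ 2 ∂μ)) atTop (nhds 0) := by
    have h1 : Tendsto (fun T => Real.sqrt (∫ ω, (φhat T ω - φsq T) ^ 2 ∂μ)) atTop
        (nhds 0) := by
      simpa [Function.comp_def] using (Real.continuous_sqrt.tendsto 0).comp hφ
    have h2 : Tendsto (fun T => Real.sqrt (∫ ω, (δhat T ω - δsq T) ^ 2 ∂μ)) atTop
        (nhds 0) := by
      simpa [Function.comp_def] using (Real.continuous_sqrt.tendsto 0).comp hδ
    simpa using h1.add h2
  exact squeeze_zero hlb hub hg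
end

section
/- Let B > 0. For each T ∈ ℕ, let φ̂_T², ψ̂_T², δ̂_T² be nonnegative random variables on a probability space with φ̂_T² ≤ δ̂_T² and ψ̂_T² ≤ δ̂_T² almost surely, and let φ_T², ψ_T², δ_T² be nonnegative constants with φ_T² + ψ_T² = δ_T² and δ_T² ≤ B. Assume E[(φ̂_T² − φ_T²)²] → 0, E[(ψ̂_T² − ψ_T²)²] → 0, and E[(δ̂_T² − δ_T²)²] → 0 as T → ∞. Then E[| φ̂_T²·ψ̂_T²/δ̂_T² − φ_T²·ψ_T²/δ_T² |] → 0 as T → ∞, where quotients are interpreted as 0 whenever their denominators are 0. -/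
open MeasureTheory ProbabilityTheory Filter

lemma key_pointwise {a b d p q s : ℝ} (ha : 0 ≤ a) (hb : 0 ≤ b) (had : a ≤ d) (hbd : b ≤ d)
    (hp : 0 ≤ p) (hq : 0 ≤ q) (hps : p ≤ s) (hqs : q ≤ s) :
    |a * b / d - p * q / s| ≤ |a - p| + |b - q| + |d - s| := by
  have hd0 : 0 ≤ d := ha.trans had
  have hs0 : 0 ≤ s := hp.trans hps
  rcases eq_or_lt_of_le hd0 with hd | hd
  · subst hd
    have ha0 : a = 0 := le_antisymm had ha
    have hb0 : b = 0 := le_antisymm hbd hb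
    subst ha0; subst hb0
    have h1 : p * q / s ≤ p := by
      rcases eq_or_lt_of_le hs0 with hs | hs
      · rw [← hs]; simpa using hp
      · rw [div_le_iff₀ hs]; nlinarith
    have h2 : |(0:ℝ) * 0 / 0 - p * q / s| = p * q / s := by
      rw [zero_mul, zero_div, zero_sub, abs_neg,
        abs_of_nonneg (div_nonneg (mul_nonneg hp hq) hs0)]
    rw [h2, abs_of_nonpos (by linarith : (0:ℝ) - p ≤ 0),
      abs_of_nonpos (by linarith : (0:ℝ) - q ≤ 0),
      abs_of_nonpos (by linarith : (0:ℝ) - s ≤ 0)]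
    linarith
  rcases eq_or_lt_of_le hs0 with hs | hs
  · subst hs
    have hp0 : p = 0 := le_antisymm hps hp
    have hq0 : q = 0 := le_antisymm hqs hq
    subst hp0; subst hq0
    have h1 : a * b / d ≤ a := by rw [div_le_iff₀ hd]; nlinarith
    have h2 : |a * b / d - (0:ℝ) * 0 / 0| = a * b / d := by
      rw [zero_mul, zero_div, sub_zero,
        abs_of_nonneg (div_nonneg (mul_nonneg ha hb) hd0)]
    rw [h2, abs_of_nonneg (by linarith : (0:ℝ) ≤ a - 0),
      abs_of_nonneg (by linarith : (0:ℝ) ≤ b - 0),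
      abs_of_nonneg (by linarith : (0:ℝ) ≤ d - 0)]
    linarith
  rcases le_total d s with hds | hds
  · have hrw : a * b / d - p * q / s =
        (a - p) * q / s + a * (b - q) / s + a * b * (s - d) / (d * s) := by
      field_simp; ring
    have h1 : |(a - p) * q / s| ≤ |a - p| := by
      rw [abs_div, abs_mul, abs_of_nonneg hq, abs_of_nonneg hs0, div_le_iff₀ hs]
      nlinarith [abs_nonneg (a - p)]
    have h2 : |a * (b - q) / s| ≤ |b - q| := by
      rw [abs_div, abs_mul, abs_of_nonneg ha, abs_of_nonneg hs0, div_le_iff₀ hs]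
      nlinarith [abs_nonneg (b - q)]
    have h3 : |a * b * (s - d) / (d * s)| ≤ |d - s| := by
      have hab : a * b ≤ d * s := by nlinarith
      rw [abs_div, abs_mul, abs_mul, abs_of_nonneg ha, abs_of_nonneg hb,
        abs_of_nonneg (by positivity : (0:ℝ) ≤ d * s), abs_sub_comm s d,
        div_le_iff₀ (by positivity)]
      nlinarith [mul_nonneg (sub_nonneg.2 hab) (abs_nonneg (d - s))]
    calc |a * b / d - p * q / s|
        ≤ |(a - p) * q / s + a * (b - q) / s| + |a * b * (s - d) / (d * s)| := by
          rw [hrw]; exact abs_add_le _ _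
      _ ≤ |(a - p) * q / s| + |a * (b - q) / s| + |a * b * (s - d) / (d * s)| :=
          add_le_add_left (abs_add_le _ _) _
      _ ≤ |a - p| + |b - q| + |d - s| := by linarith
  · have hrw : a * b / d - p * q / s =
        (a - p) * b / d + p * (b - q) / d + p * q * (s - d) / (d * s) := by
      field_simp; ring
    have h1 : |(a - p) * b / d| ≤ |a - p| := by
      rw [abs_div, abs_mul, abs_of_nonneg hb, abs_of_nonneg hd0, div_le_iff₀ hd]
      nlinarith [abs_nonneg (a - p)]
    have h2 : |p * (b - q) / d| ≤ |b - q| := by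
      rw [abs_div, abs_mul, abs_of_nonneg hp, abs_of_nonneg hd0, div_le_iff₀ hd]
      nlinarith [abs_nonneg (b - q)]
    have h3 : |p * q * (s - d) / (d * s)| ≤ |d - s| := by
      have hab : p * q ≤ d * s := by nlinarith
      rw [abs_div, abs_mul, abs_mul, abs_of_nonneg hp, abs_of_nonneg hq,
        abs_of_nonneg (by positivity : (0:ℝ) ≤ d * s), abs_sub_comm s d,
        div_le_iff₀ (by positivity)]
      nlinarith [mul_nonneg (sub_nonneg.2 hab) (abs_nonneg (d - s))]
    calc |a * b / d - p * q / s|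
        ≤ |(a - p) * b / d + p * (b - q) / d| + |p * q * (s - d) / (d * s)| := by
          rw [hrw]; exact abs_add_le _ _
      _ ≤ |(a - p) * b / d| + |p * (b - q) / d| + |p * q * (s - d) / (d * s)| :=
          add_le_add_left (abs_add_le _ _) _
      _ ≤ |a - p| + |b - q| + |d - s| := by linarith

lemma L1_le_sqrt_L2 {Ω : Type*} [MeasurableSpace Ω] (μ : Measure Ω) [IsProbabilityMeasure μ]
    {X : Ω → ℝ} (hX : MemLp X 2 μ) :
    ∫ ω, |X ω| ∂μ ≤ Real.sqrt (∫ ω, X ω ^ 2 ∂μ) := by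
  have hconj : Real.HolderConjugate 2 2 := Real.HolderConjugate.two_two
  have hX2 : MemLp (fun ω => |X ω|) (ENNReal.ofReal 2) μ := by
    rw [ENNReal.ofReal_ofNat]; exact hX.abs
  have h1 : MemLp (fun _ : Ω => (1 : ℝ)) (ENNReal.ofReal 2) μ := memLp_const _
  have key := integral_mul_le_Lp_mul_Lq_of_nonneg hconj
    (Filter.Eventually.of_forall fun ω => abs_nonneg (X ω))
    (Filter.Eventually.of_forall fun _ => zero_le_one) hX2 h1
  simp only [mul_one] at key
  have heq : ∫ ω, |X ω| ^ (2:ℝ) ∂μ = ∫ ω, X ω ^ 2 ∂μ := by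
    refine integral_congr_ae (Filter.Eventually.of_forall fun ω => ?_)
    show |X ω| ^ (2:ℝ) = X ω ^ 2
    have h2 : |X ω| ^ (2:ℝ) = |X ω| ^ (2:ℕ) := by
      rw [← Real.rpow_natCast]; norm_num
    rw [h2, sq_abs]
  have hone : ∫ _ω, (1:ℝ) ^ (2:ℝ) ∂μ = 1 := by simp
  rw [heq, hone] at key
  have hnn : 0 ≤ ∫ ω, X ω ^ 2 ∂μ := integral_nonneg fun ω => sq_nonneg _
  calc ∫ ω, |X ω| ∂μ ≤ (∫ ω, X ω ^ 2 ∂μ) ^ (1/2 : ℝ) * (1:ℝ) ^ (1/2 : ℝ) := key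
    _ = Real.sqrt (∫ ω, X ω ^ 2 ∂μ) := by
        rw [Real.one_rpow, mul_one, Real.sqrt_eq_rpow]

/-- Lemma A.2 of the supplementary material.
With nonnegative random variables `φ̂_T², ψ̂_T² ≤ δ̂_T²` (a.s.) and nonnegative
constants `φ_T² + ψ_T² = δ_T² ≤ B`, L²-consistency of the three sample
parameters implies L¹-consistency of the estimated minimum loss:
`E[|φ̂_T²ψ̂_T²/δ̂_T² − φ_T²ψ_T²/δ_T²|] → 0` (quotients are `0` when the
denominator vanishes, Lean's division-by-zero convention). -/
theorem stmt11 {Ω : Type*} [MeasurableSpace Ω] (μ : Measure Ω) [IsProbabilityMeasure μ]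
    (B : ℝ) (hB : 0 < B)
    (φhat ψhat δhat : ℕ → Ω → ℝ) (φsq ψsq δsq : ℕ → ℝ)
    (hmeasφ : ∀ T, Measurable (φhat T)) (hmeasψ : ∀ T, Measurable (ψhat T))
    (hmeasδ : ∀ T, Measurable (δhat T))
    (hφNN : ∀ T, ∀ᵐ ω ∂μ, 0 ≤ φhat T ω) (hψNN : ∀ T, ∀ᵐ ω ∂μ, 0 ≤ ψhat T ω)
    (hδNN : ∀ T, ∀ᵐ ω ∂μ, 0 ≤ δhat T ω)
    (hφle : ∀ T, ∀ᵐ ω ∂μ, φhat T ω ≤ δhat T ω)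
    (hψle : ∀ T, ∀ᵐ ω ∂μ, ψhat T ω ≤ δhat T ω)
    (hconstNN : ∀ T, 0 ≤ φsq T ∧ 0 ≤ ψsq T ∧ 0 ≤ δsq T)
    (hsum : ∀ T, φsq T + ψsq T = δsq T) (hbd : ∀ T, δsq T ≤ B)
    (hL2φ : ∀ T, MemLp (φhat T) 2 μ) (hL2ψ : ∀ T, MemLp (ψhat T) 2 μ)
    (hL2δ : ∀ T, MemLp (δhat T) 2 μ)
    (hφ : Tendsto (fun T => ∫ ω, (φhat T ω - φsq T) ^ 2 ∂μ) atTop (nhds 0))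
    (hψ : Tendsto (fun T => ∫ ω, (ψhat T ω - ψsq T) ^ 2 ∂μ) atTop (nhds 0))
    (hδ : Tendsto (fun T => ∫ ω, (δhat T ω - δsq T) ^ 2 ∂μ) atTop (nhds 0)) :
    Tendsto
      (fun T => ∫ ω,
        |φhat T ω * ψhat T ω / δhat T ω - φsq T * ψsq T / δsq T| ∂μ)
      atTop (nhds 0) := by
  -- L² memberships of the differences
  have hMφ : ∀ T, MemLp (fun ω => φhat T ω - φsq T) 2 μ := fun T =>
    (hL2φ T).sub (memLp_const _)
  have hMψ : ∀ T, MemLp (fun ω => ψhat T ω - ψsq T) 2 μ := fun T =>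
    (hL2ψ T).sub (memLp_const _)
  have hMδ : ∀ T, MemLp (fun ω => δhat T ω - δsq T) 2 μ := fun T =>
    (hL2δ T).sub (memLp_const _)
  -- integrability of absolute differences
  have hintφ : ∀ T, Integrable (fun ω => |φhat T ω - φsq T|) μ := fun T =>
    ((hMφ T).integrable (by norm_num)).abs
  have hintψ : ∀ T, Integrable (fun ω => |ψhat T ω - ψsq T|) μ := fun T =>
    ((hMψ T).integrable (by norm_num)).abs
  have hintδ : ∀ T, Integrable (fun ω => |δhat T ω - δsq T|) μ := fun T =>
    ((hMδ T).integrable (by norm_num)).abs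
  have hinth : ∀ T, Integrable
      (fun ω => |φhat T ω - φsq T| + |ψhat T ω - ψsq T| + |δhat T ω - δsq T|) μ :=
    fun T => ((hintφ T).add (hintψ T)).add (hintδ T)
  -- pointwise a.e. bound
  have hbound : ∀ T, ∀ᵐ ω ∂μ,
      |φhat T ω * ψhat T ω / δhat T ω - φsq T * ψsq T / δsq T| ≤
        |φhat T ω - φsq T| + |ψhat T ω - ψsq T| + |δhat T ω - δsq T| := by
    intro T
    filter_upwards [hφNN T, hψNN T, hφle T, hψle T] with ω h1 h2 h3 h4
    refine key_pointwise h1 h2 h3 h4 (hconstNN T).1 (hconstNN T).2.1 ?_ ?_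
    · have := hsum T; have := (hconstNN T).2.1; linarith
    · have := hsum T; have := (hconstNN T).1; linarith
  -- measurability and integrability of the target
  have hgm : ∀ T, AEStronglyMeasurable
      (fun ω => |φhat T ω * ψhat T ω / δhat T ω - φsq T * ψsq T / δsq T|) μ := fun T =>
    ((((hmeasφ T).mul (hmeasψ T)).div (hmeasδ T)).sub measurable_const).abs.aestronglyMeasurable
  have hintg : ∀ T, Integrable
      (fun ω => |φhat T ω * ψhat T ω / δhat T ω - φsq T * ψsq T / δsq T|) μ := by
    intro T
    refine (hinth T).mono' (hgm T) ?_
    filter_upwards [hbound T] with ω h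
    rwa [Real.norm_eq_abs, abs_abs]
  -- the upper bound sequence
  have hup : ∀ T,
      ∫ ω, |φhat T ω * ψhat T ω / δhat T ω - φsq T * ψsq T / δsq T| ∂μ ≤
        Real.sqrt (∫ ω, (φhat T ω - φsq T) ^ 2 ∂μ) +
        Real.sqrt (∫ ω, (ψhat T ω - ψsq T) ^ 2 ∂μ) +
        Real.sqrt (∫ ω, (δhat T ω - δsq T) ^ 2 ∂μ) := by
    intro T
    calc ∫ ω, |φhat T ω * ψhat T ω / δhat T ω - φsq T * ψsq T / δsq T| ∂μ
        ≤ ∫ ω, (|φhat T ω - φsq T| + |ψhat T ω - ψsq T| + |δhat T ω - δsq T|) ∂μ :=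
          integral_mono_ae (hintg T) (hinth T) (hbound T)
      _ = (∫ ω, |φhat T ω - φsq T| ∂μ) + (∫ ω, |ψhat T ω - ψsq T| ∂μ) +
          (∫ ω, |δhat T ω - δsq T| ∂μ) := by
          exact (integral_add ((hintφ T).add (hintψ T)) (hintδ T)).trans
            (by congr 1; exact integral_add (hintφ T) (hintψ T))
      _ ≤ _ := by
          gcongr
          · exact L1_le_sqrt_L2 μ (hMφ T)
          · exact L1_le_sqrt_L2 μ (hMψ T)
          · exact L1_le_sqrt_L2 μ (hMδ T)
  -- the upper bound tends to zero
  have htend : Tendsto (fun T =>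
      Real.sqrt (∫ ω, (φhat T ω - φsq T) ^ 2 ∂μ) +
      Real.sqrt (∫ ω, (ψhat T ω - ψsq T) ^ 2 ∂μ) +
      Real.sqrt (∫ ω, (δhat T ω - δsq T) ^ 2 ∂μ)) atTop (nhds 0) := by
    have t1 := (Real.continuous_sqrt.tendsto 0).comp hφ
    have t2 := (Real.continuous_sqrt.tendsto 0).comp hψ
    have t3 := (Real.continuous_sqrt.tendsto 0).comp hδ
    simp only [Function.comp_def, Real.sqrt_zero] at t1 t2 t3
    simpa using (t1.add t2).add t3
  exact tendsto_of_tendsto_of_tendsto_of_le_of_le tendsto_const_nhds htend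
    (fun T => integral_nonneg fun ω => abs_nonneg _) hup
end
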